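/- Consider one LALM iteration from (x^k, y^k, z^k) with z^k ≥ 0 componentwise, under Assumption (Lip), with θ ∈ (0,1), 0 < ρ_y ≤ β and 0 < ρ_z ≤ β(1−θ). Let (x*, y*, z*) be a KKT point with associated set J ⊆ {1,…,m} such that f_j(x*) = 0 and z_j* > 0 for j ∈ J, and f_j(x*) < 0 and z_j* = 0 for j ∉ J. Suppose in addition: β f_j(x^{k+1}) + z_j^k > 0 and β f_j(x^{k+1}) + z_j* > 0 for j ∈ J; β f_j(x^{k+1}) + z_j^k < 0 and β f_j(x^{k+1}) < 0 for j ∉ J; and the strong-convexity inequality f_0(x^{k+1}) − f_0(x*) + ⟨y*, r^{k+1}⟩ + (β/2)‖r^{k+1}‖² + Ψ_β(x^{k+1}, z*) − Ψ_β(x*, z*) ≥ (μ/4)‖x^{k+1} − x*‖² holds for a constant μ > 0. Then (θμ/4)‖x^{k+1} − x*‖² + (η^k/2)‖x^{k+1} − x*‖² − (β/2)‖r^{k+1}‖² + (1/(2ρ_y))‖y^{k+1} − y*‖² + (1/(2ρ_z))‖z^{k+1} − z*‖² + (1/2)(x^{k+1} − x^k)ᵀ[(η^k − L_g − L_Ψ(x^k,z^k))I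 − βAᵀA](x^{k+1} − x^k) + (β(1 − θ/2) − ρ_y/2)‖r^{k+1}‖² ≤ (η^k/2)‖x^k − x*‖² − (β/2)‖r^k‖² + (1/(2ρ_y))‖y^k − y*‖² + (1/(2ρ_z))‖z^k − z*‖². -/

import Mathlib

open scoped RealInnerProductSpace

noncomputable section

/-- The function `ψ_β(u,v)` used in the classic augmented Lagrangian. -/
def psi (β u v : ℝ) : ℝ :=
  if 0 ≤ β * u + v then u * v + β / 2 * u ^ 2 else -(v ^ 2) / (2 * β)

/-- `Ψ_β(x,z) = ∑_j ψ_β(f_j(x), z_j)`. -/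
def PsiAug {p m : ℕ} (β : ℝ) (f : Fin m → EuclideanSpace ℝ (Fin p) → ℝ)
    (x : EuclideanSpace ℝ (Fin p)) (z : EuclideanSpace ℝ (Fin m)) : ℝ :=
  ∑ j, psi β (f j x) (z j)

/-- `∇_x F_β(x,y,z)`, the `x`-gradient of the smooth part of the augmented Lagrangian. -/
def gradFx {p q m : ℕ} (β : ℝ) (f : Fin m → EuclideanSpace ℝ (Fin p) → ℝ)
    (g' : EuclideanSpace ℝ (Fin p) → EuclideanSpace ℝ (Fin p))
    (f' : Fin m → EuclideanSpace ℝ (Fin p) → EuclideanSpace ℝ (Fin p))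
    (A : EuclideanSpace ℝ (Fin p) →L[ℝ] EuclideanSpace ℝ (Fin q))
    (b : EuclideanSpace ℝ (Fin q))
    (x : EuclideanSpace ℝ (Fin p)) (y : EuclideanSpace ℝ (Fin q))
    (z : EuclideanSpace ℝ (Fin m)) : EuclideanSpace ℝ (Fin p) :=
  g' x + (ContinuousLinearMap.adjoint A) (y + β • (A x - b))
    + ∑ j, max (β * f j x + z j) 0 • f' j x

section Helpers

variable {E : Type*} [NormedAddCommGroup E] [InnerProductSpace ℝ E] [CompleteSpace E]

lemma line_hasDerivAt (φ : E → ℝ) (φ' : E → E) (hφ : ∀ x, HasGradientAt φ (φ' x) x)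
    (x d : E) (t : ℝ) :
    HasDerivAt (fun s : ℝ => φ (x + s • d)) ⟪φ' (x + t • d), d⟫ t := by
  have hline : HasDerivAt (fun s : ℝ => x + s • d) d t := by
    simpa using ((hasDerivAt_id t).smul_const d).const_add x
  have := ((hφ (x + t • d)).hasFDerivAt).comp_hasDerivAt t hline
  simpa [InnerProductSpace.toDual_apply_apply, Function.comp_def] using this

lemma descent_lemma (φ : E → ℝ) (φ' : E → E) (C : ℝ)
    (hφ : ∀ x, HasGradientAt φ (φ' x) x)
    (hLip : ∀ a b, ‖φ' a - φ' b‖ ≤ C * ‖a - b‖) (x y : E) :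
    φ y ≤ φ x + ⟪φ' x, y - x⟫ + C / 2 * ‖y - x‖ ^ 2 := by
  set d := y - x with hd
  have hcont : Continuous φ' := by
    rw [Metric.continuous_iff]
    intro a ε hε
    rcases le_or_gt C 0 with hC | hC
    · exact ⟨1, one_pos, fun b _ => by
        have := hLip b a
        have : ‖φ' b - φ' a‖ ≤ 0 := this.trans (mul_nonpos_of_nonpos_of_nonneg hC (norm_nonneg _))
        simpa [dist_eq_norm] using lt_of_le_of_lt this hε⟩
    · refine ⟨ε / C, by positivity, fun b hb => ?_⟩
      have := hLip b a
      rw [dist_eq_norm] at hb ⊢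
      calc ‖φ' b - φ' a‖ ≤ C * ‖b - a‖ := this
        _ < C * (ε / C) := by exact (mul_lt_mul_iff_right₀ hC).2 hb
        _ = ε := by field_simp
  have hu : ∀ t : ℝ, HasDerivAt (fun s : ℝ => φ (x + s • d)) ⟪φ' (x + t • d), d⟫ t :=
    fun t => line_hasDerivAt φ φ' hφ x d t
  have hcontu : Continuous fun t : ℝ => ⟪φ' (x + t • d), d⟫ := by
    exact (Continuous.inner (hcont.comp (by continuity)) continuous_const)
  have hInt : IntervalIntegrable (fun t : ℝ => ⟪φ' (x + t • d), d⟫) MeasureTheory.volume 0 1 :=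
    hcontu.intervalIntegrable 0 1
  have hFTC : ∫ t in (0:ℝ)..1, ⟪φ' (x + t • d), d⟫ = φ (x + d) - φ x := by
    have := intervalIntegral.integral_eq_sub_of_hasDerivAt
      (f := fun s : ℝ => φ (x + s • d)) (f' := fun t : ℝ => ⟪φ' (x + t • d), d⟫)
      (fun t _ => hu t) hInt
    simpa using this
  have hbound : ∫ t in (0:ℝ)..1, ⟪φ' (x + t • d), d⟫
      ≤ ∫ t in (0:ℝ)..1, (⟪φ' x, d⟫ + C * ‖d‖ ^ 2 * t) := by
    apply intervalIntegral.integral_mono_on (by norm_num) hInt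
    · exact (continuous_const.add (continuous_const.mul continuous_id)).intervalIntegrable 0 1
    · intro t ht
      have h1 : ⟪φ' (x + t • d) - φ' x, d⟫ ≤ ‖φ' (x + t • d) - φ' x‖ * ‖d‖ :=
        real_inner_le_norm _ _
      have h2 : ‖φ' (x + t • d) - φ' x‖ ≤ C * (t * ‖d‖) := by
        have := hLip (x + t • d) x
        simpa [norm_smul, abs_of_nonneg ht.1] using this
      have h3 : ⟪φ' (x + t • d), d⟫ = ⟪φ' x, d⟫ + ⟪φ' (x + t • d) - φ' x, d⟫ := by
        rw [inner_sub_left]; ring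
      have h4 : ‖φ' (x + t • d) - φ' x‖ * ‖d‖ ≤ C * (t * ‖d‖) * ‖d‖ :=
        mul_le_mul_of_nonneg_right h2 (norm_nonneg _)
      nlinarith [norm_nonneg d]
  have hval : ∫ t in (0:ℝ)..1, (⟪φ' x, d⟫ + C * ‖d‖ ^ 2 * t) = ⟪φ' x, d⟫ + C / 2 * ‖d‖ ^ 2 := by
    have i2 : IntervalIntegrable (fun t : ℝ => C * ‖d‖ ^ 2 * t) MeasureTheory.volume 0 1 :=
      (continuous_const.mul continuous_id').intervalIntegrable 0 1
    rw [intervalIntegral.integral_add intervalIntegrable_const i2]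
    have hlin : ∫ t in (0:ℝ)..1, C * ‖d‖ ^ 2 * t
        = C * ‖d‖ ^ 2 / 2 * 1 ^ 2 - C * ‖d‖ ^ 2 / 2 * 0 ^ 2 := by
      apply intervalIntegral.integral_eq_sub_of_hasDerivAt
        (f := fun t : ℝ => C * ‖d‖ ^ 2 / 2 * t ^ 2) _ i2
      intro t _
      have := (hasDerivAt_pow 2 t).const_mul (C * ‖d‖ ^ 2 / 2)
      exact this.congr_deriv (by norm_num; ring)
    rw [hlin]
    simp
    ring
  have : φ (x + d) - φ x ≤ ⟪φ' x, d⟫ + C / 2 * ‖d‖ ^ 2 := by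
    rw [← hFTC, ← hval] at *; linarith [hbound]
  have hxy : x + d = y := by rw [hd]; abel
  rw [hxy] at this; linarith

lemma convex_grad_ineq (φ : E → ℝ) (φ' : E → E) (hconv : ConvexOn ℝ Set.univ φ)
    (hφ : ∀ x, HasGradientAt φ (φ' x) x) (x y : E) :
    φ x + ⟪φ' x, y - x⟫ ≤ φ y := by
  set d := y - x with hd
  have hu : HasDerivAt (fun s : ℝ => φ (x + s • d)) ⟪φ' x, d⟫ 0 := by
    simpa using line_hasDerivAt φ φ' hφ x d 0
  have hslope : Filter.Tendsto (fun t : ℝ => (φ (x + t • d) - φ x) / t) (nhdsWithin 0 (Set.Ioi 0))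
      (nhds ⟪φ' x, d⟫) := by
    have := hasDerivAt_iff_tendsto_slope.1 hu
    have h2 := this.mono_left (nhdsWithin_mono 0 (by intro t ht; exact ne_of_gt ht : Set.Ioi (0:ℝ) ⊆ {0}ᶜ))
    apply h2.congr'
    filter_upwards [self_mem_nhdsWithin] with t ht
    simp [slope_def_field, div_eq_inv_mul]
  have hev : ∀ᶠ t in nhdsWithin (0:ℝ) (Set.Ioi 0), (φ (x + t • d) - φ x) / t ≤ φ y - φ x := by
    filter_upwards [Ioc_mem_nhdsGT_of_mem (by norm_num : (0:ℝ) ∈ Set.Ico 0 1)] with t ht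
    have hcomb := hconv.2 (Set.mem_univ x) (Set.mem_univ y) (by linarith [ht.1, ht.2] : (0:ℝ) ≤ 1 - t)
      (le_of_lt ht.1) (by ring : (1 - t) + t = 1)
    have hxc : (1 - t) • x + t • y = x + t • d := by
      rw [hd]; module
    rw [hxc] at hcomb
    rw [div_le_iff₀ ht.1]
    simp only [smul_eq_mul] at hcomb
    nlinarith [ht.1]
  have := le_of_tendsto hslope hev
  linarith

lemma comb_norm_sq (a c : E) (t : ℝ) :
    ‖(1 - t) • a + t • c‖ ^ 2 = (1 - t) * ‖a‖ ^ 2 + t * ‖c‖ ^ 2 - t * (1 - t) * ‖a - c‖ ^ 2 := by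
  simp only [norm_add_sq_real, norm_sub_sq_real, norm_smul, real_inner_smul_left,
    real_inner_smul_right, Real.norm_eq_abs, mul_pow, sq_abs]
  ring

lemma strong_min (h : E → ℝ) (hconv : ConvexOn ℝ Set.univ h) (G : E) (η : ℝ) (x0 x1 : E)
    (hmin : ∀ x, h x1 + ⟪G, x1⟫ + η / 2 * ‖x1 - x0‖ ^ 2
      ≤ h x + ⟪G, x⟫ + η / 2 * ‖x - x0‖ ^ 2) (y : E) :
    h x1 + ⟪G, x1⟫ + η / 2 * ‖x1 - x0‖ ^ 2
      ≤ h y + ⟪G, y⟫ + η / 2 * ‖y - x0‖ ^ 2 - η / 2 * ‖y - x1‖ ^ 2 := by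
  set M := h x1 + ⟪G, x1⟫ + η / 2 * ‖x1 - x0‖ ^ 2 with hM
  set Ry := h y + ⟪G, y⟫ + η / 2 * ‖y - x0‖ ^ 2 with hRy
  set N := ‖y - x1‖ ^ 2 with hN
  have key : ∀ t : ℝ, t ∈ Set.Ioc (0:ℝ) 1 → M ≤ Ry - η / 2 * (1 - t) * N := by
    intro t ht
    set xt := (1 - t) • x1 + t • y with hxt
    have h1 : M ≤ h xt + ⟪G, xt⟫ + η / 2 * ‖xt - x0‖ ^ 2 := hmin xt
    have h2 : h xt ≤ (1 - t) * h x1 + t * h y :=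
      hconv.2 (Set.mem_univ x1) (Set.mem_univ y) (by linarith [ht.2]) ht.1.le (by ring)
    have h3 : ⟪G, xt⟫ = (1 - t) * ⟪G, x1⟫ + t * ⟪G, y⟫ := by
      rw [hxt, inner_add_right, real_inner_smul_right, real_inner_smul_right]
    have h4 : ‖xt - x0‖ ^ 2
        = (1 - t) * ‖x1 - x0‖ ^ 2 + t * ‖y - x0‖ ^ 2 - t * (1 - t) * ‖x1 - y‖ ^ 2 := by
      have : xt - x0 = (1 - t) • (x1 - x0) + t • (y - x0) := by rw [hxt]; module
      rw [this, comb_norm_sq]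
      congr 3
      abel
    have h5 : ‖x1 - y‖ = ‖y - x1‖ := norm_sub_rev _ _
    have h6 : M ≤ (1 - t) * M + t * Ry - η / 2 * (t * (1 - t)) * N := by
      rw [hM, hRy, hN]
      calc M ≤ h xt + ⟪G, xt⟫ + η / 2 * ‖xt - x0‖ ^ 2 := h1
        _ ≤ (1 - t) * h x1 + t * h y + ((1 - t) * ⟪G, x1⟫ + t * ⟪G, y⟫)
            + η / 2 * ((1 - t) * ‖x1 - x0‖ ^ 2 + t * ‖y - x0‖ ^ 2
              - t * (1 - t) * ‖y - x1‖ ^ 2) := by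
            rw [h3, h4, h5]
            linarith [h2]
        _ = (1 - t) * (h x1 + ⟪G, x1⟫ + η / 2 * ‖x1 - x0‖ ^ 2)
            + t * (h y + ⟪G, y⟫ + η / 2 * ‖y - x0‖ ^ 2)
            - η / 2 * (t * (1 - t)) * ‖y - x1‖ ^ 2 := by ring
    have h7 : t * M ≤ t * (Ry - η / 2 * (1 - t) * N) := by nlinarith [h6]
    exact le_of_mul_le_mul_left (by linarith [h7]) ht.1
  have htend : Filter.Tendsto (fun t : ℝ => Ry - η / 2 * (1 - t) * N)
      (nhdsWithin 0 (Set.Ioi 0)) (nhds (Ry - η / 2 * 1 * N)) := by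
    apply Filter.Tendsto.mono_left _ nhdsWithin_le_nhds
    have : Continuous fun t : ℝ => Ry - η / 2 * (1 - t) * N := by continuity
    simpa using this.tendsto 0
  have hev : ∀ᶠ t in nhdsWithin (0:ℝ) (Set.Ioi 0), M ≤ Ry - η / 2 * (1 - t) * N := by
    filter_upwards [Ioc_mem_nhdsGT_of_mem (by norm_num : (0:ℝ) ∈ Set.Ico 0 1)] with t ht
    exact key t ht
  have := ge_of_tendsto htend hev
  linarith [this]

lemma psi_descent {β : ℝ} (hβ : 0 < β) (v u0 u1 : ℝ) :
    psi β u1 v ≤ psi β u0 v + max (β * u0 + v) 0 * (u1 - u0) + β / 2 * (u1 - u0) ^ 2 := by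
  have h2β : (0:ℝ) < 2 * β := by linarith
  have hkey : (2 * β) * (-(v ^ 2) / (2 * β)) = -(v ^ 2) := by field_simp
  unfold psi
  rcases le_or_gt 0 (β * u0 + v) with h0 | h0 <;> rcases le_or_gt 0 (β * u1 + v) with h1 | h1
  · rw [if_pos h0, if_pos h1, max_eq_left h0]; nlinarith
  · rw [if_pos h0, if_neg (not_le.2 h1), max_eq_left h0]
    nlinarith [sq_nonneg (β * u1 + v), h2β, hkey]
  · rw [if_neg (not_le.2 h0), if_pos h1, max_eq_right (le_of_lt h0)]
    nlinarith [h2β, hkey, mul_nonneg (by linarith : (0:ℝ) ≤ β * (u1 - u0) - (β * u1 + v))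
      (by linarith : (0:ℝ) ≤ β * (u1 - u0) + (β * u1 + v))]
  · rw [if_neg (not_le.2 h0), if_neg (not_le.2 h1), max_eq_right (le_of_lt h0)]
    nlinarith [sq_nonneg (u1 - u0), hβ.le, mul_nonneg hβ.le (sq_nonneg (u1 - u0))]

lemma psi_convex_lb {β : ℝ} (hβ : 0 < β) (v u0 u1 : ℝ) :
    psi β u0 v + max (β * u0 + v) 0 * (u1 - u0) ≤ psi β u1 v := by
  have h2β : (0:ℝ) < 2 * β := by linarith
  have hkey : (2 * β) * (-(v ^ 2) / (2 * β)) = -(v ^ 2) := by field_simp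
  unfold psi
  rcases le_or_gt 0 (β * u0 + v) with h0 | h0 <;> rcases le_or_gt 0 (β * u1 + v) with h1 | h1
  · rw [if_pos h0, if_pos h1, max_eq_left h0]
    nlinarith [mul_nonneg hβ.le (sq_nonneg (u1 - u0))]
  · rw [if_pos h0, if_neg (not_le.2 h1), max_eq_left h0]
    nlinarith [h2β, hkey, mul_nonneg h0 (by linarith : (0:ℝ) ≤ -(β * (u1 - u0)) - (β * u0 + v)),
      sq_nonneg (β * u0 + v)]
  · rw [if_neg (not_le.2 h0), if_pos h1, max_eq_right (le_of_lt h0)]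
    nlinarith [h2β, hkey, sq_nonneg (β * u1 + v)]
  · rw [if_neg (not_le.2 h0), if_neg (not_le.2 h1), max_eq_right (le_of_lt h0)]; simp

lemma psi_nonpos {β : ℝ} (hβ : 0 < β) {u v : ℝ} (hu : u < 0) (hv : 0 ≤ v) :
    psi β u v ≤ 0 := by
  unfold psi
  split_ifs with h
  · nlinarith [mul_nonneg (by linarith : (0:ℝ) ≤ -u) (by linarith : (0:ℝ) ≤ v + β * u / 2)]
  · have : 0 ≤ v ^ 2 / (2 * β) := by positivity
    rw [neg_div]; linarith

lemma psi_zero_left {β v : ℝ} (hv : 0 ≤ v) : psi β 0 v = 0 := by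
  simp [psi, hv]

lemma psi_pos_branch {β u v : ℝ} (h : 0 ≤ β * u + v) : psi β u v = u * v + β / 2 * u ^ 2 :=
  if_pos h

lemma psi_neg_branch {β u v : ℝ} (h : β * u + v < 0) : psi β u v = -(v ^ 2) / (2 * β) :=
  if_neg (not_le.2 h)

lemma eucl_norm_sq_sub {n : ℕ} (v w : EuclideanSpace ℝ (Fin n)) :
    ‖v - w‖ ^ 2 = ∑ i, (v i - w i) ^ 2 := by
  have h1 : ‖v - w‖ ^ 2 = ∑ i, ‖(v - w) i‖ ^ 2 := by
    rw [EuclideanSpace.norm_eq, Real.sq_sqrt (Finset.sum_nonneg fun i _ => sq_nonneg _)]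
  rw [h1]
  refine Finset.sum_congr rfl fun i _ => ?_
  simp [Real.norm_eq_abs, sq_abs]

end Helpers
set_option maxHeartbeats 1000000

/-- Theorem: one-iteration inequality used for local linear convergence. -/
theorem stmt15 {p q m : ℕ}
    (β ρy ρz ηk Lg θ μ : ℝ) (L B : Fin m → ℝ)
    (hβ : 0 < β) (hθ : 0 < θ ∧ θ < 1)
    (hρy : 0 < ρy ∧ ρy ≤ β) (hρz : 0 < ρz ∧ ρz ≤ β * (1 - θ)) (hμ : 0 < μ)
    (g h : EuclideanSpace ℝ (Fin p) → ℝ)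
    (f : Fin m → EuclideanSpace ℝ (Fin p) → ℝ)
    (g' : EuclideanSpace ℝ (Fin p) → EuclideanSpace ℝ (Fin p))
    (f' : Fin m → EuclideanSpace ℝ (Fin p) → EuclideanSpace ℝ (Fin p))
    (A : EuclideanSpace ℝ (Fin p) →L[ℝ] EuclideanSpace ℝ (Fin q))
    (b : EuclideanSpace ℝ (Fin q))
    (hgconv : ConvexOn ℝ Set.univ g) (hhconv : ConvexOn ℝ Set.univ h)
    (hfconv : ∀ j, ConvexOn ℝ Set.univ (f j))
    (hg : ∀ x, HasGradientAt g (g' x) x)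
    (hf : ∀ j x, HasGradientAt (f j) (f' j x) x)
    -- Assumption (Lip)
    (hLg : ∀ xh xt, ‖g' xh - g' xt‖ ≤ Lg * ‖xh - xt‖)
    (hLf : ∀ j xh xt, ‖f' j xh - f' j xt‖ ≤ L j * ‖xh - xt‖)
    (hBf : ∀ j x, ‖f' j x‖ ≤ B j)
    -- the KKT point `(x*, y*, z*)` and the active set `J`
    (xs : EuclideanSpace ℝ (Fin p)) (ys : EuclideanSpace ℝ (Fin q))
    (zs : EuclideanSpace ℝ (Fin m))
    (hkkt1 : ∃ s : EuclideanSpace ℝ (Fin p), (∀ u, h xs + ⟪s, u - xs⟫ ≤ h u) ∧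
      g' xs + s + (ContinuousLinearMap.adjoint A) ys + ∑ j, zs j • f' j xs = 0)
    (hkkt2 : A xs = b)
    (hkkt3 : ∀ j, 0 ≤ zs j ∧ f j xs ≤ 0 ∧ zs j * f j xs = 0)
    (J : Finset (Fin m))
    (hJin : ∀ j ∈ J, f j xs = 0 ∧ 0 < zs j)
    (hJout : ∀ j ∉ J, f j xs < 0 ∧ zs j = 0)
    -- one LALM iteration from `(x^k, y^k, z^k)` with `z^k ≥ 0`
    (xk xk1 : EuclideanSpace ℝ (Fin p)) (yk yk1 : EuclideanSpace ℝ (Fin q))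
    (zk zk1 : EuclideanSpace ℝ (Fin m))
    (hzk : ∀ j, 0 ≤ zk j)
    (hxmin : ∀ x : EuclideanSpace ℝ (Fin p),
      h xk1 + ⟪gradFx β f g' f' A b xk yk zk, xk1⟫ + ηk / 2 * ‖xk1 - xk‖ ^ 2
        ≤ h x + ⟪gradFx β f g' f' A b xk yk zk, x⟫ + ηk / 2 * ‖x - xk‖ ^ 2)
    (hy : yk1 = yk + ρy • (A xk1 - b))
    (hz : ∀ j, zk1 j = zk j + ρz * max (-(zk j) / β) (f j xk1))
    -- the local sign conditions
    (hsgnin : ∀ j ∈ J, 0 < β * f j xk1 + zk j ∧ 0 < β * f j xk1 + zs j)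
    (hsgnout : ∀ j ∉ J, β * f j xk1 + zk j < 0 ∧ β * f j xk1 < 0)
    -- the local strong-convexity inequality
    (hscv : μ / 4 * ‖xk1 - xs‖ ^ 2
      ≤ (g xk1 + h xk1) - (g xs + h xs) + ⟪ys, A xk1 - b⟫ + β / 2 * ‖A xk1 - b‖ ^ 2
        + PsiAug β f xk1 zs - PsiAug β f xs zs) :
    θ * μ / 4 * ‖xk1 - xs‖ ^ 2 + ηk / 2 * ‖xk1 - xs‖ ^ 2 - β / 2 * ‖A xk1 - b‖ ^ 2
      + 1 / (2 * ρy) * ‖yk1 - ys‖ ^ 2 + 1 / (2 * ρz) * ‖zk1 - zs‖ ^ 2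
      + 1 / 2 * ((ηk - Lg - ∑ j, (β * (B j) ^ 2 + L j * max (β * f j xk + zk j) 0))
            * ‖xk1 - xk‖ ^ 2 - β * ‖A (xk1 - xk)‖ ^ 2)
      + (β * (1 - θ / 2) - ρy / 2) * ‖A xk1 - b‖ ^ 2
    ≤ ηk / 2 * ‖xk - xs‖ ^ 2 - β / 2 * ‖A xk - b‖ ^ 2
      + 1 / (2 * ρy) * ‖yk - ys‖ ^ 2 + 1 / (2 * ρz) * ‖zk - zs‖ ^ 2 := by
  obtain ⟨hθ0, hθ1⟩ := hθ
  obtain ⟨hρy0, hρyβ⟩ := hρy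
  obtain ⟨hρz0, hρzβ⟩ := hρz
  -- abbreviations (purely notational, kept unfolded in statements)
  -- Step 1: strong minimality of the x-update
  have hA := strong_min h hhconv (gradFx β f g' f' A b xk yk zk) ηk xk xk1 hxmin xs
  rw [norm_sub_rev xs xk, norm_sub_rev xs xk1] at hA
  have hGd : ⟪gradFx β f g' f' A b xk yk zk, xk1 - xs⟫
      = ⟪gradFx β f g' f' A b xk yk zk, xk1⟫ - ⟪gradFx β f g' f' A b xk yk zk, xs⟫ :=
    inner_sub_right _ _ _
  -- expansion of the gradient inner product
  have hAe : A (xk1 - xs) = A xk1 - b := by rw [map_sub, hkkt2]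
  have hG : ⟪gradFx β f g' f' A b xk yk zk, xk1 - xs⟫
      = ⟪g' xk, xk1 - xs⟫ + ⟪yk, A xk1 - b⟫ + β * ⟪A xk - b, A xk1 - b⟫
        + ∑ j, max (β * f j xk + zk j) 0 * ⟪f' j xk, xk1 - xs⟫ := by
    unfold gradFx
    rw [inner_add_left, inner_add_left, ContinuousLinearMap.adjoint_inner_left, hAe,
      inner_add_left, real_inner_smul_left, sum_inner]
    simp only [real_inner_smul_left]
    ring
  -- the quadratic expansion of β ⟪r^k, r^{k+1}⟫
  have hrr : β * ⟪A xk - b, A xk1 - b⟫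
      = β / 2 * ‖A xk - b‖ ^ 2 + β / 2 * ‖A xk1 - b‖ ^ 2 - β / 2 * ‖A (xk1 - xk)‖ ^ 2 := by
    have h1 : A (xk1 - xk) = (A xk1 - b) - (A xk - b) := by rw [map_sub]; abel
    have h2 : ‖A (xk1 - xk)‖ ^ 2
        = ‖A xk1 - b‖ ^ 2 - 2 * ⟪A xk1 - b, A xk - b⟫ + ‖A xk - b‖ ^ 2 := by
      rw [h1, norm_sub_sq_real]
    have h3 : ⟪A xk1 - b, A xk - b⟫ = ⟪A xk - b, A xk1 - b⟫ := real_inner_comm _ _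
    rw [h3] at h2
    linear_combination (β / 2) * h2
  -- descent + convexity for g
  have hgchain : g xk1 - g xs ≤ ⟪g' xk, xk1 - xs⟫ + Lg / 2 * ‖xk1 - xk‖ ^ 2 := by
    have hdes := descent_lemma g g' Lg hg hLg xk xk1
    have hcvx := convex_grad_ineq g g' hgconv hg xk xs
    have hsplit : ⟪g' xk, xk1 - xs⟫ = ⟪g' xk, xk1 - xk⟫ - ⟪g' xk, xs - xk⟫ := by
      rw [← inner_sub_right]; congr 1; abel
    linarith only [hdes, hcvx, hsplit]
  -- descent + convexity for each ψ_β(f_j ·, z_j^k)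
  have hEj : ∀ j, psi β (f j xk1) (zk j) - psi β (f j xs) (zk j)
      ≤ max (β * f j xk + zk j) 0 * ⟪f' j xk, xk1 - xs⟫
        + (β * (B j) ^ 2 + L j * max (β * f j xk + zk j) 0) / 2 * ‖xk1 - xk‖ ^ 2 := by
    intro j
    have hwj : (0:ℝ) ≤ max (β * f j xk + zk j) 0 := le_max_right _ _
    have hd1 := descent_lemma (f j) (f' j) (L j) (hf j) (hLf j) xk xk1
    have hc1 := convex_grad_ineq (f j) (f' j) (hfconv j) (hf j) xk xk1
    have hc2 := convex_grad_ineq (f j) (f' j) (hfconv j) (hf j) xk1 xk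
    have hc3 := convex_grad_ineq (f j) (f' j) (hfconv j) (hf j) xk xs
    have hpsid := psi_descent hβ (zk j) (f j xk) (f j xk1)
    have hpsic := psi_convex_lb hβ (zk j) (f j xk) (f j xs)
    have hi1 : |⟪f' j xk, xk1 - xk⟫| ≤ B j * ‖xk1 - xk‖ :=
      (abs_real_inner_le_norm _ _).trans
        (mul_le_mul_of_nonneg_right (hBf j xk) (norm_nonneg _))
    have hi2 : |⟪f' j xk1, xk - xk1⟫| ≤ B j * ‖xk1 - xk‖ := by
      have := (abs_real_inner_le_norm (f' j xk1) (xk - xk1)).trans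
        (mul_le_mul_of_nonneg_right (hBf j xk1) (norm_nonneg _))
      rwa [norm_sub_rev] at this
    have hΔlo : -(B j * ‖xk1 - xk‖) ≤ f j xk1 - f j xk := by
      have := (abs_le.1 hi1).1
      linarith only [this, hc1]
    have hΔhi : f j xk1 - f j xk ≤ B j * ‖xk1 - xk‖ := by
      have := (abs_le.1 hi2).1
      linarith only [this, hc2]
    have hΔ2 : (f j xk1 - f j xk) ^ 2 ≤ (B j) ^ 2 * ‖xk1 - xk‖ ^ 2 := by
      calc (f j xk1 - f j xk) ^ 2 ≤ (B j * ‖xk1 - xk‖) ^ 2 := sq_le_sq' hΔlo hΔhi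
        _ = (B j) ^ 2 * ‖xk1 - xk‖ ^ 2 := by ring
    have hb2 : β / 2 * (f j xk1 - f j xk) ^ 2 ≤ β / 2 * ((B j) ^ 2 * ‖xk1 - xk‖ ^ 2) :=
      mul_le_mul_of_nonneg_left hΔ2 (by positivity)
    have hw1 : max (β * f j xk + zk j) 0 * (f j xk1 - f j xk - ⟪f' j xk, xk1 - xk⟫)
        ≤ max (β * f j xk + zk j) 0 * (L j / 2 * ‖xk1 - xk‖ ^ 2) :=
      mul_le_mul_of_nonneg_left (by linarith only [hd1]) hwj
    have hw2 : max (β * f j xk + zk j) 0 * ⟪f' j xk, xs - xk⟫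
        ≤ max (β * f j xk + zk j) 0 * (f j xs - f j xk) :=
      mul_le_mul_of_nonneg_left (by linarith only [hc3]) hwj
    have hsplitj : max (β * f j xk + zk j) 0 * ⟪f' j xk, xk1 - xs⟫
        = max (β * f j xk + zk j) 0 * ⟪f' j xk, xk1 - xk⟫
          - max (β * f j xk + zk j) 0 * ⟪f' j xk, xs - xk⟫ := by
      rw [← mul_sub, ← inner_sub_right]
      congr 2
      abel
    linarith only [hpsid, hpsic, hw1, hw2, hb2, hsplitj]
  have hfsum : (∑ j, psi β (f j xk1) (zk j)) - (∑ j, psi β (f j xs) (zk j))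
      ≤ (∑ j, max (β * f j xk + zk j) 0 * ⟪f' j xk, xk1 - xs⟫)
        + (∑ j, (β * (B j) ^ 2 + L j * max (β * f j xk + zk j) 0)) / 2 * ‖xk1 - xk‖ ^ 2 := by
    rw [← Finset.sum_sub_distrib]
    calc ∑ j, (psi β (f j xk1) (zk j) - psi β (f j xs) (zk j))
        ≤ ∑ j, (max (β * f j xk + zk j) 0 * ⟪f' j xk, xk1 - xs⟫
          + (β * (B j) ^ 2 + L j * max (β * f j xk + zk j) 0) / 2 * ‖xk1 - xk‖ ^ 2) :=
          Finset.sum_le_sum fun j _ => hEj j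
      _ = _ := by
          rw [Finset.sum_add_distrib]
          congr 1
          rw [← Finset.sum_mul, ← Finset.sum_div]
  -- combine Step 1 with descent/convexity: the key "primal" inequality
  have hIstar : (g xk1 + h xk1) - (g xs + h xs) + ⟪yk, A xk1 - b⟫
      + β / 2 * ‖A xk - b‖ ^ 2 + β / 2 * ‖A xk1 - b‖ ^ 2 - β / 2 * ‖A (xk1 - xk)‖ ^ 2
      + (∑ j, psi β (f j xk1) (zk j)) - (∑ j, psi β (f j xs) (zk j))
      ≤ ηk / 2 * ‖xk - xs‖ ^ 2 - ηk / 2 * ‖xk1 - xs‖ ^ 2 - ηk / 2 * ‖xk1 - xk‖ ^ 2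
        + (Lg + ∑ j, (β * (B j) ^ 2 + L j * max (β * f j xk + zk j) 0)) / 2
          * ‖xk1 - xk‖ ^ 2 := by
    linarith only [hA, hGd, hG, hrr, hgchain, hfsum]
  -- the y-update identity
  have hyexp : ‖yk1 - ys‖ ^ 2
      = ‖yk - ys‖ ^ 2 + 2 * ρy * ⟪yk - ys, A xk1 - b⟫ + ρy ^ 2 * ‖A xk1 - b‖ ^ 2 := by
    have h1 : yk1 - ys = (yk - ys) + ρy • (A xk1 - b) := by rw [hy]; abel
    rw [h1, norm_add_sq_real, real_inner_smul_right, norm_smul, Real.norm_eq_abs, mul_pow,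
      sq_abs]
    ring
  have hY : ⟪yk - ys, A xk1 - b⟫
      = 1 / (2 * ρy) * ‖yk1 - ys‖ ^ 2 - 1 / (2 * ρy) * ‖yk - ys‖ ^ 2
        - ρy / 2 * ‖A xk1 - b‖ ^ 2 := by
    have hρy' : ρy ≠ 0 := ne_of_gt hρy0
    rw [hyexp]
    field_simp
    ring
  have hiy : ⟪yk, A xk1 - b⟫ = ⟪ys, A xk1 - b⟫ + ⟪yk - ys, A xk1 - b⟫ := by
    rw [inner_sub_left]; ring
  -- the value of Ψ_β(x^{k+1}, z*) - Ψ_β(x*, z*)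
  have hMj : ∀ j, psi β (f j xk1) (zs j) - psi β (f j xs) (zs j)
      = zs j * f j xk1 + β / 2 * (if j ∈ J then (f j xk1) ^ 2 else 0) := by
    intro j
    by_cases hj : j ∈ J
    · obtain ⟨hfx0, hzs0⟩ := hJin j hj
      obtain ⟨hs1, hs2⟩ := hsgnin j hj
      rw [psi_pos_branch hs2.le, hfx0, psi_zero_left (hkkt3 j).1, if_pos hj]
      ring
    · obtain ⟨hfxs, hzs0⟩ := hJout j hj
      obtain ⟨hs1, hs2⟩ := hsgnout j hj
      have hb1 : β * f j xk1 + zs j < 0 := by rw [hzs0]; linarith only [hs2]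
      have hb2 : β * f j xs + zs j < 0 := by
        rw [hzs0]
        have := mul_neg_of_pos_of_neg hβ hfxs
        linarith only [this]
      rw [psi_neg_branch hb1, psi_neg_branch hb2, if_neg hj, hzs0]
      ring
  have hM : (∑ j, psi β (f j xk1) (zs j)) - (∑ j, psi β (f j xs) (zs j))
      = (∑ j, zs j * f j xk1)
        + β / 2 * (∑ j, if j ∈ J then (f j xk1) ^ 2 else 0) := by
    rw [← Finset.sum_sub_distrib]
    rw [Finset.sum_congr rfl fun j _ => hMj j]
    rw [Finset.sum_add_distrib, ← Finset.mul_sum]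
  -- the KKT saddle inequality
  have hR : 0 ≤ (g xk1 + h xk1) - (g xs + h xs) + ⟪ys, A xk1 - b⟫
      + ∑ j, zs j * f j xk1 := by
    obtain ⟨s, hs, hstat⟩ := hkkt1
    have hgc : g xs + ⟪g' xs, xk1 - xs⟫ ≤ g xk1 := convex_grad_ineq g g' hgconv hg xs xk1
    have hhc : h xs + ⟪s, xk1 - xs⟫ ≤ h xk1 := hs xk1
    have hfc : ∀ j, zs j * ⟪f' j xs, xk1 - xs⟫ ≤ zs j * f j xk1 := by
      intro j
      have hcv := convex_grad_ineq (f j) (f' j) (hfconv j) (hf j) xs xk1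
      have h0 := (hkkt3 j).1
      have h1 : zs j * (f j xs + ⟪f' j xs, xk1 - xs⟫) ≤ zs j * f j xk1 :=
        mul_le_mul_of_nonneg_left hcv h0
      have h2 := (hkkt3 j).2.2
      linarith only [h1, h2]
    have hfcsum : ∑ j, zs j * ⟪f' j xs, xk1 - xs⟫ ≤ ∑ j, zs j * f j xk1 :=
      Finset.sum_le_sum fun j _ => hfc j
    have hys : ⟪ys, A xk1 - b⟫ = ⟪(ContinuousLinearMap.adjoint A) ys, xk1 - xs⟫ := by
      rw [ContinuousLinearMap.adjoint_inner_left, map_sub, hkkt2]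
    have hsum : ∑ j, zs j * ⟪f' j xs, xk1 - xs⟫ = ⟪∑ j, zs j • f' j xs, xk1 - xs⟫ := by
      rw [sum_inner]
      exact Finset.sum_congr rfl fun j _ => (real_inner_smul_left _ _ _).symm
    have hzero : ⟪g' xs, xk1 - xs⟫ + ⟪s, xk1 - xs⟫
        + ⟪(ContinuousLinearMap.adjoint A) ys, xk1 - xs⟫
        + ⟪∑ j, zs j • f' j xs, xk1 - xs⟫ = 0 := by
      rw [← inner_add_left, ← inner_add_left, ← inner_add_left, hstat, inner_zero_left]
    linarith only [hgc, hhc, hfcsum, hys, hsum, hzero]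
  -- lower bounds on the strong-convexity quantity Q
  have hQ1 : μ / 4 * ‖xk1 - xs‖ ^ 2
      ≤ (g xk1 + h xk1) - (g xs + h xs) + ⟪ys, A xk1 - b⟫ + β / 2 * ‖A xk1 - b‖ ^ 2
        + (∑ j, psi β (f j xk1) (zs j)) - (∑ j, psi β (f j xs) (zs j)) := by
    have := hscv
    simp only [PsiAug] at this
    exact this
  have hSnn : (0:ℝ) ≤ ∑ j, if j ∈ J then (f j xk1) ^ 2 else 0 :=
    Finset.sum_nonneg fun j _ => by split_ifs with hj; exacts [sq_nonneg _, le_refl 0]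
  have hQ2 : β / 2 * ‖A xk1 - b‖ ^ 2
        + β / 2 * (∑ j, if j ∈ J then (f j xk1) ^ 2 else 0)
      ≤ (g xk1 + h xk1) - (g xs + h xs) + ⟪ys, A xk1 - b⟫ + β / 2 * ‖A xk1 - b‖ ^ 2
        + (∑ j, psi β (f j xk1) (zs j)) - (∑ j, psi β (f j xs) (zs j)) := by
    linarith only [hR, hM]
  have hQ3 : θ * (μ / 4 * ‖xk1 - xs‖ ^ 2)
        + (1 - θ) * (β / 2 * ‖A xk1 - b‖ ^ 2)
        + (1 - θ) * (β / 2 * (∑ j, if j ∈ J then (f j xk1) ^ 2 else 0))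
      ≤ (g xk1 + h xk1) - (g xs + h xs) + ⟪ys, A xk1 - b⟫ + β / 2 * ‖A xk1 - b‖ ^ 2
        + (∑ j, psi β (f j xk1) (zs j)) - (∑ j, psi β (f j xs) (zs j)) := by
    have h1 := mul_le_mul_of_nonneg_left hQ1 hθ0.le
    have h2 := mul_le_mul_of_nonneg_left hQ2 (by linarith only [hθ1] : (0:ℝ) ≤ 1 - θ)
    linarith only [h1, h2]
  have hSslack : ρz / 2 * (∑ j, if j ∈ J then (f j xk1) ^ 2 else 0)
      ≤ (1 - θ) * (β / 2 * (∑ j, if j ∈ J then (f j xk1) ^ 2 else 0)) := by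
    have := mul_nonneg (by linarith only [hρzβ] : (0:ℝ) ≤ β * (1 - θ) - ρz) hSnn
    linarith only [this]
  -- the z-update inequality, componentwise
  have hKj : ∀ j, 1 / (2 * ρz) * ((zk1 j - zs j) ^ 2 - (zk j - zs j) ^ 2)
        - ρz / 2 * (if j ∈ J then (f j xk1) ^ 2 else 0)
      ≤ psi β (f j xk1) (zk j) - psi β (f j xk1) (zs j)
        - psi β (f j xs) (zk j) + psi β (f j xs) (zs j) := by
    intro j
    by_cases hj : j ∈ J
    · obtain ⟨hfx0, hzs0⟩ := hJin j hj
      obtain ⟨hs1, hs2⟩ := hsgnin j hj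
      have hmax : max (-(zk j) / β) (f j xk1) = f j xk1 := by
        apply max_eq_right
        rw [div_le_iff₀ hβ]
        linarith only [hs1]
      have hzupd : zk1 j = zk j + ρz * f j xk1 := by rw [hz j, hmax]
      rw [hzupd, psi_pos_branch hs1.le, psi_pos_branch hs2.le, hfx0,
        psi_zero_left (hzk j), psi_zero_left (hkkt3 j).1, if_pos hj]
      apply le_of_eq
      have hρz' : ρz ≠ 0 := ne_of_gt hρz0
      field_simp
      ring
    · obtain ⟨hfxs, hzs0⟩ := hJout j hj
      obtain ⟨hs1, hs2⟩ := hsgnout j hj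
      have hmax : max (-(zk j) / β) (f j xk1) = -(zk j) / β := by
        apply max_eq_left
        rw [le_div_iff₀ hβ]
        linarith only [hs1]
      have hzupd : zk1 j = zk j + ρz * (-(zk j) / β) := by rw [hz j, hmax]
      have hψ : psi β (f j xs) (zk j) ≤ 0 := psi_nonpos hβ hfxs (hzk j)
      have hb1 : β * f j xk1 + zs j < 0 := by rw [hzs0]; linarith only [hs2]
      have hb2 : β * f j xs + zs j < 0 := by
        rw [hzs0]
        have := mul_neg_of_pos_of_neg hβ hfxs
        linarith only [this]
      rw [hzupd, psi_neg_branch hs1, psi_neg_branch hb1, psi_neg_branch hb2, hzs0, if_neg hj]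
      have heq : 1 / (2 * ρz) * ((zk j + ρz * (-(zk j) / β) - 0) ^ 2 - (zk j - 0) ^ 2)
          = (zk j) ^ 2 * (ρz - 2 * β) / (2 * β ^ 2) := by
        have hρz' : ρz ≠ 0 := ne_of_gt hρz0
        have hβ' : β ≠ 0 := ne_of_gt hβ
        field_simp
        ring
      have h2 : (zk j) ^ 2 * (ρz - 2 * β) / (2 * β ^ 2) ≤ -((zk j) ^ 2) / (2 * β) := by
        rw [div_le_div_iff₀ (by positivity) (by positivity)]
        have hβθ : 0 < β * θ := mul_pos hβ hθ0
        have hρβ : ρz ≤ β := by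
          have h' : β * (1 - θ) = β - β * θ := by ring
          linarith only [hρzβ, hβθ, h'.le, h'.ge]
        have hkey : (0:ℝ) ≤ 2 * β * ((zk j) ^ 2 * (β - ρz)) :=
          mul_nonneg (by linarith only [hβ] : (0:ℝ) ≤ 2 * β)
            (mul_nonneg (sq_nonneg (zk j)) (by linarith only [hρβ] : (0:ℝ) ≤ β - ρz))
        linarith only [hkey]
      have h0 : -((0:ℝ) ^ 2) / (2 * β) = 0 := by norm_num
      rw [h0]
      calc 1 / (2 * ρz) * ((zk j + ρz * (-(zk j) / β) - 0) ^ 2 - (zk j - 0) ^ 2) - ρz / 2 * 0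
          = (zk j) ^ 2 * (ρz - 2 * β) / (2 * β ^ 2) := by rw [heq]; ring
        _ ≤ -((zk j) ^ 2) / (2 * β) := h2
        _ ≤ -(zk j ^ 2) / (2 * β) - 0 - psi β (f j xs) (zk j) + 0 := by
            simp only [neg_div]
            linarith only [hψ]
  -- summing the z-update inequality
  have hzn1 : ‖zk1 - zs‖ ^ 2 = ∑ j, (zk1 j - zs j) ^ 2 := eucl_norm_sq_sub zk1 zs
  have hzn2 : ‖zk - zs‖ ^ 2 = ∑ j, (zk j - zs j) ^ 2 := eucl_norm_sq_sub zk zs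
  have hD : 1 / (2 * ρz) * (‖zk1 - zs‖ ^ 2 - ‖zk - zs‖ ^ 2)
        - ρz / 2 * (∑ j, if j ∈ J then (f j xk1) ^ 2 else 0)
      ≤ (∑ j, psi β (f j xk1) (zk j)) - (∑ j, psi β (f j xk1) (zs j))
        - (∑ j, psi β (f j xs) (zk j)) + (∑ j, psi β (f j xs) (zs j)) := by
    rw [hzn1, hzn2]
    have hsum := Finset.sum_le_sum (s := Finset.univ) fun j _ => hKj j
    have hL : ∑ j, (1 / (2 * ρz) * ((zk1 j - zs j) ^ 2 - (zk j - zs j) ^ 2)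
          - ρz / 2 * (if j ∈ J then (f j xk1) ^ 2 else 0))
        = 1 / (2 * ρz) * ((∑ j, (zk1 j - zs j) ^ 2) - ∑ j, (zk j - zs j) ^ 2)
          - ρz / 2 * (∑ j, if j ∈ J then (f j xk1) ^ 2 else 0) := by
      rw [Finset.sum_sub_distrib, ← Finset.mul_sum, ← Finset.mul_sum, Finset.sum_sub_distrib]
    have hRs : ∑ j, (psi β (f j xk1) (zk j) - psi β (f j xk1) (zs j)
          - psi β (f j xs) (zk j) + psi β (f j xs) (zs j))
        = (∑ j, psi β (f j xk1) (zk j)) - (∑ j, psi β (f j xk1) (zs j))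
          - (∑ j, psi β (f j xs) (zk j)) + (∑ j, psi β (f j xs) (zs j)) := by
      rw [Finset.sum_add_distrib, Finset.sum_sub_distrib, Finset.sum_sub_distrib]
    rw [hL, hRs] at hsum
    exact hsum
  -- final assembly
  linarith only [hIstar, hQ3, hY, hiy, hD, hSslack]
end
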